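/- Let x = p/q ∈ ℂ, where p, q ∈ ℤ[i] are coprime in ℤ[i] and q ≠ 0. Let z ∈ ℤ[i] with z and conj(z) coprime in ℤ[i], and let ε ∈ {1, −1, i, −i}. Then the rotation w ↦ ε·(z/conj(z))·w belongs to SOC(x+Γ) if and only if q divides εz − conj(z) in ℤ[i]. Consequently, SOC(x+Γ) = SOC(1/q + Γ). -/

import Mathlib

open Pointwise Complex ComplexConjugate

/-- The square lattice `Γ = ℤ[i]`, i.e. the Gaussian integers viewed as an additive
subgroup of `ℂ`. -/
noncomputable def Zi : AddSubgroup ℂ :=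
  AddMonoidHom.range (GaussianInt.toComplex.toAddMonoidHom)

/-- `f` is (the underlying map of) a surjective real-linear isometry of `ℂ`. -/
def IsLinIso (f : ℂ → ℂ) : Prop := ∃ R : ℂ ≃ₗᵢ[ℝ] ℂ, ⇑R = f

/-- `f` is a rotation of `ℂ`, i.e. multiplication by a complex number of modulus 1. -/
def IsRotation (f : ℂ → ℂ) : Prop := ∃ u : ℂ, ‖u‖ = 1 ∧ ∀ w, f w = u * w

/-- `f` is a reflection of `ℂ`, i.e. `w ↦ u * conj w` for a complex number `u` of
modulus 1. -/
def IsReflection (f : ℂ → ℂ) : Prop := ∃ u : ℂ, ‖u‖ = 1 ∧ ∀ w, f w = u * conj w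

/-- The shifted square lattice `x + Γ` as a subset of `ℂ`. -/
noncomputable def shiftedZi (x : ℂ) : Set ℂ := x +ᵥ (Zi : Set ℂ)

/-- `OC (x+Γ)`: the set of (maps of) surjective real-linear isometries `f` of `ℂ` such
that `(x+Γ) ∩ f(x+Γ)` is a coset `c + Λ`, with `c ∈ x+Γ` and `Λ` a finite-index
additive subgroup of `Γ = ℤ[i]`. -/
noncomputable def OCs (x : ℂ) : Set (ℂ → ℂ) :=
  {f | IsLinIso f ∧ ∃ c ∈ shiftedZi x, ∃ Λ : AddSubgroup ℂ, Λ ≤ Zi ∧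
    Λ.relIndex Zi ≠ 0 ∧ shiftedZi x ∩ (f '' shiftedZi x) = c +ᵥ (Λ : Set ℂ)}

/-- `SOC (x+Γ)`: the rotations among the coincidence isometries of `x + Γ`. -/
noncomputable def SOCs (x : ℂ) : Set (ℂ → ℂ) := {f ∈ OCs x | IsRotation f}

section Aux

open GaussianInt

local notation "ℤ[i]" => GaussianInt

lemma mem_Zi_iff {w : ℂ} : w ∈ Zi ↔ ∃ a : ℤ[i], (a : ℂ) = w := Iff.rfl

lemma mem_shiftedZi_iff {x w : ℂ} : w ∈ shiftedZi x ↔ ∃ a : ℤ[i], w = x + (a : ℂ) := by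
  unfold shiftedZi
  rw [Set.mem_vadd_set]
  constructor
  · rintro ⟨b, ⟨a, rfl⟩, rfl⟩; exact ⟨a, rfl⟩
  · rintro ⟨a, rfl⟩; exact ⟨(a : ℂ), ⟨a, rfl⟩, rfl⟩

lemma mem_unitSet_iff {ε : ℤ[i]} :
    ε ∈ ({1, -1, ⟨0, 1⟩, ⟨0, -1⟩} : Set ℤ[i]) ↔ IsUnit ε := by
  constructor
  · intro h
    rcases h with rfl | rfl | rfl | rfl
    · exact isUnit_one
    · exact isUnit_one.neg
    · exact IsUnit.of_mul_eq_one (⟨0, -1⟩ : ℤ[i]) (by decide)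
    · exact IsUnit.of_mul_eq_one (⟨0, 1⟩ : ℤ[i]) (by decide)
  · intro h
    have h1 : ε.re * ε.re + ε.im * ε.im = 1 := by
      have := (Zsqrtd.norm_eq_one_iff' (by norm_num) ε).2 h
      simpa [Zsqrtd.norm] using this
    obtain ⟨r, m⟩ := ε
    simp only at h1
    have hr1 : r ≤ 1 := by nlinarith
    have hr2 : -1 ≤ r := by nlinarith
    have hm1 : m ≤ 1 := by nlinarith
    have hm2 : -1 ≤ m := by nlinarith
    simp only [Set.mem_insert_iff, Set.mem_singleton_iff]
    interval_cases r <;> interval_cases m <;> first | omega | decide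

end Aux
noncomputable def zMul (z : GaussianInt) : AddSubgroup ℂ :=
  AddMonoidHom.range (GaussianInt.toComplex.toAddMonoidHom.comp (AddMonoidHom.mulLeft z))

lemma mem_zMul_iff {z : GaussianInt} {w : ℂ} :
    w ∈ zMul z ↔ ∃ a : GaussianInt, ((z * a : GaussianInt) : ℂ) = w := Iff.rfl

lemma zMul_le (z : GaussianInt) : zMul z ≤ Zi := by
  rintro w ⟨a, rfl⟩; exact ⟨z * a, rfl⟩

lemma relindex_zMul {z : GaussianInt} (hz : z ≠ 0) : (zMul z).relIndex Zi ≠ 0 := by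
  set n := z.norm.natAbs with hn
  have hn0 : n ≠ 0 := by
    simp only [hn, Int.natAbs_ne_zero]
    exact fun h => hz (GaussianInt.norm_eq_zero.1 h)
  haveI : NeZero n := ⟨hn0⟩
  have hnz : (n : ℤ) = z.norm := Int.natAbs_of_nonneg (GaussianInt.norm_nonneg z)
  have hsurj : Function.Surjective (fun ab : ZMod n × ZMod n =>
      (QuotientAddGroup.mk (⟨((⟨(ab.1.val : ℤ), (ab.2.val : ℤ)⟩ : GaussianInt) : ℂ),
        ⟨_, rfl⟩⟩ : Zi) : Zi ⧸ (zMul z).addSubgroupOf Zi)) := by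
    intro w
    induction w using QuotientAddGroup.induction_on with
    | H v =>
      obtain ⟨g, hg⟩ := v.2
      refine ⟨((g.re : ZMod n), (g.im : ZMod n)), ?_⟩
      set r : GaussianInt := ⟨(((g.re : ZMod n)).val : ℤ), (((g.im : ZMod n)).val : ℤ)⟩ with hr
      have h1 : g.re - ((((g.re : ZMod n)).val : ℤ)) = (n : ℤ) * (g.re / (n : ℤ)) := by
        rw [ZMod.val_intCast]
        have := Int.emod_add_mul_ediv g.re (n : ℤ)
        linarith
      have h2 : g.im - ((((g.im : ZMod n)).val : ℤ)) = (n : ℤ) * (g.im / (n : ℤ)) := by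
        rw [ZMod.val_intCast]
        have := Int.emod_add_mul_ediv g.im (n : ℤ)
        linarith
      set k : ℤ := g.re / (n : ℤ)
      set l : ℤ := g.im / (n : ℤ)
      have hg_sub : g - r = (z.norm : GaussianInt) * ⟨k, l⟩ := by
        have : (z.norm : GaussianInt) * (⟨k, l⟩ : GaussianInt) =
            ⟨z.norm * k, z.norm * l⟩ := by
          ext <;> simp [Zsqrtd.re_mul, Zsqrtd.im_mul, Zsqrtd.re_intCast, Zsqrtd.im_intCast]
        rw [this]
        ext
        · simp only [Zsqrtd.re_sub, hr]
          rw [← hnz]; exact h1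
        · simp only [Zsqrtd.im_sub, hr]
          rw [← hnz]; exact h2
      rw [QuotientAddGroup.eq]
      rw [AddSubgroup.mem_addSubgroupOf]
      refine ⟨star z * ⟨k, l⟩, ?_⟩
      have hzz : z * (star z * ⟨k, l⟩) = g - r := by
        rw [← mul_assoc, ← Zsqrtd.norm_eq_mul_conj, hg_sub]
      have hg' : GaussianInt.toComplex g = (v : ℂ) := hg
      simp only [AddMonoidHom.coe_comp, Function.comp_apply, AddMonoidHom.coe_mulLeft,
        RingHom.toAddMonoidHom_eq_coe, AddMonoidHom.coe_coe]
      show GaussianInt.toComplex (z * (star z * ⟨k, l⟩)) = _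
      rw [hzz, GaussianInt.toComplex_sub, hg']
      simp only [AddSubgroup.coe_add, NegMemClass.coe_neg]
      show _ = -GaussianInt.toComplex r + (v : ℂ)
      ring
  have hfin : Finite (Zi ⧸ (zMul z).addSubgroupOf Zi) := Finite.of_surjective _ hsurj
  have : (zMul z).relIndex Zi = Nat.card (Zi ⧸ (zMul z).addSubgroupOf Zi) := rfl
  rw [this]
  exact Nat.card_ne_zero.2 ⟨inferInstance, hfin⟩

lemma Zi_infinite : Infinite Zi := by
  apply Infinite.of_injective (fun n : ℤ => (⟨((⟨n, 0⟩ : GaussianInt) : ℂ), ⟨_, rfl⟩⟩ : Zi))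
  intro a b hab
  have : ((⟨a, 0⟩ : GaussianInt) : ℂ) = ((⟨b, 0⟩ : GaussianInt) : ℂ) := congrArg Subtype.val hab
  rw [GaussianInt.toComplex_inj] at this
  exact congrArg Zsqrtd.re this
lemma cross_int {p q a b z ε : GaussianInt} (hq : q ≠ 0) (hz : z ≠ 0)
    (h : (p : ℂ) / (q : ℂ) + (a : ℂ) =
      (ε : ℂ) * ((z : ℂ) / conj (z : ℂ)) * ((p : ℂ) / (q : ℂ) + (b : ℂ))) :
    star z * (p + q * a) = ε * z * (p + q * b) := by
  have hqc : (q : ℂ) ≠ 0 := by rwa [Ne, GaussianInt.toComplex_eq_zero]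
  have hzc : conj (z : ℂ) ≠ 0 := by
    rw [← GaussianInt.toComplex_star, Ne, GaussianInt.toComplex_eq_zero]
    simpa using hz
  rw [← GaussianInt.toComplex_inj]
  simp only [GaussianInt.toComplex_mul, GaussianInt.toComplex_add, GaussianInt.toComplex_star]
  field_simp at h
  have h2 : ((starRingEnd ℂ) (z : ℂ) * ((p : ℂ) + (q : ℂ) * (a : ℂ))) * (q : ℂ) =
      ((ε : ℂ) * (z : ℂ) * ((p : ℂ) + (q : ℂ) * (b : ℂ))) * (q : ℂ) := by
    linear_combination (q : ℂ) * h
  exact mul_right_cancel₀ hqc h2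

lemma cross_complex {p q a b z ε : GaussianInt} (hq : q ≠ 0) (hz : z ≠ 0)
    (h : star z * (p + q * a) = ε * z * (p + q * b)) :
    (p : ℂ) / (q : ℂ) + (a : ℂ) =
      (ε : ℂ) * ((z : ℂ) / conj (z : ℂ)) * ((p : ℂ) / (q : ℂ) + (b : ℂ)) := by
  have hqc : (q : ℂ) ≠ 0 := by rwa [Ne, GaussianInt.toComplex_eq_zero]
  have hzc : conj (z : ℂ) ≠ 0 := by
    rw [← GaussianInt.toComplex_star, Ne, GaussianInt.toComplex_eq_zero]
    simpa using hz
  have hc := congrArg (fun t : GaussianInt => (t : ℂ)) h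
  simp only [GaussianInt.toComplex_mul, GaussianInt.toComplex_add,
    GaussianInt.toComplex_star] at hc
  field_simp
  linear_combination hc

lemma exists_unit_rep (u : ℂ) (hu : ‖u‖ = 1) (a B : GaussianInt) (hB : B ≠ 0)
    (hratio : u = (a : ℂ) / (B : ℂ)) :
    ∃ z ε : GaussianInt, IsCoprime z (star z) ∧ IsUnit ε ∧
      u = (ε : ℂ) * ((z : ℂ) / conj (z : ℂ)) := by
  have hBc : (B : ℂ) ≠ 0 := by rwa [Ne, GaussianInt.toComplex_eq_zero]
  have ha : a ≠ 0 := by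
    rintro rfl
    simp [hratio] at hu
  set d := EuclideanDomain.gcd a B with hd
  have hd0 : d ≠ 0 := fun h => hB ((EuclideanDomain.gcd_eq_zero_iff.1 h).2)
  obtain ⟨a₁, ha₁⟩ := EuclideanDomain.gcd_dvd_left a B
  obtain ⟨B₁, hB₁⟩ := EuclideanDomain.gcd_dvd_right a B
  rw [← hd] at ha₁ hB₁
  have hB₁0 : B₁ ≠ 0 := fun h => hB (by rw [hB₁, h, mul_zero])
  have ha₁0 : a₁ ≠ 0 := fun h => ha (by rw [ha₁, h, mul_zero])
  have hdc : (d : ℂ) ≠ 0 := by rwa [Ne, GaussianInt.toComplex_eq_zero]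
  have hB₁c : (B₁ : ℂ) ≠ 0 := by rwa [Ne, GaussianInt.toComplex_eq_zero]
  have ha₁c : (a₁ : ℂ) ≠ 0 := by rwa [Ne, GaussianInt.toComplex_eq_zero]
  -- coprimality of a₁ and B₁ via Bezout
  have hbez := EuclideanDomain.gcd_eq_gcd_ab a B
  have hcop1 : IsCoprime a₁ B₁ := by
    refine ⟨EuclideanDomain.gcdA a B, EuclideanDomain.gcdB a B, ?_⟩
    have hbez' : d = d * (EuclideanDomain.gcdA a B * a₁ + EuclideanDomain.gcdB a B * B₁) := by
      nth_rewrite 1 [hd, hbez]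
      rw [ha₁, hB₁]; ring
    have := mul_left_cancel₀ hd0 (hbez'.symm.trans (mul_one d).symm)
    linear_combination this
  -- equal norms
  have hnormc : ‖(a₁ : ℂ)‖ = ‖(B₁ : ℂ)‖ := by
    have h1 : ‖(a : ℂ)‖ = ‖(B : ℂ)‖ := by
      have : ‖u‖ * ‖(B : ℂ)‖ = ‖(a : ℂ)‖ := by
        rw [hratio, norm_div, div_mul_cancel₀]
        exact norm_ne_zero_iff.2 hBc
      rw [hu, one_mul] at this
      exact this.symm
    have h2 : ‖(d : ℂ)‖ * ‖(a₁ : ℂ)‖ = ‖(d : ℂ)‖ * ‖(B₁ : ℂ)‖ := by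
      rw [← norm_mul, ← norm_mul, ← GaussianInt.toComplex_mul, ← GaussianInt.toComplex_mul,
        ← ha₁, ← hB₁, h1]
    exact mul_left_cancel₀ (norm_ne_zero_iff.2 hdc) h2
  have hnorm : a₁.norm = B₁.norm := by
    have h1 : (a₁.norm : ℝ) = (B₁.norm : ℝ) := by
      rw [GaussianInt.intCast_real_norm, GaussianInt.intCast_real_norm, ← Complex.sq_norm,
        ← Complex.sq_norm, hnormc]
    exact_mod_cast h1
  have hmulconj : a₁ * star a₁ = B₁ * star B₁ := by
    rw [← Zsqrtd.norm_eq_mul_conj, ← Zsqrtd.norm_eq_mul_conj, hnorm]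
  have hdvd1 : B₁ ∣ star a₁ :=
    hcop1.symm.dvd_of_dvd_mul_left ⟨star B₁, by linear_combination hmulconj⟩
  have hdvd2 : star a₁ ∣ B₁ := by
    have hcop2 : IsCoprime (star a₁) (star B₁) := hcop1.map (starRingEnd GaussianInt)
    exact hcop2.dvd_of_dvd_mul_right ⟨a₁, by linear_combination - hmulconj⟩
  obtain ⟨uu, huu⟩ := associated_of_dvd_dvd hdvd2 hdvd1
  refine ⟨a₁, ((uu⁻¹ : GaussianIntˣ) : GaussianInt), ?_, (uu⁻¹ : GaussianIntˣ).isUnit, ?_⟩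
  · have : IsCoprime a₁ (star a₁ * (uu : GaussianInt)) := huu ▸ hcop1
    exact this.of_mul_right_left
  · have hca₁ : conj (a₁ : ℂ) ≠ 0 := by
      rw [← GaussianInt.toComplex_star, Ne, GaussianInt.toComplex_eq_zero]
      simpa using ha₁0
    have hEH : (((uu⁻¹ : GaussianIntˣ) : GaussianInt) : ℂ) * (((uu : GaussianInt)) : ℂ) = 1 := by
      rw [← GaussianInt.toComplex_mul]
      norm_cast
      simp
    have hB₁eq : (B₁ : ℂ) = conj (a₁ : ℂ) * ((uu : GaussianInt) : ℂ) := by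
      rw [← GaussianInt.toComplex_star, ← GaussianInt.toComplex_mul, huu]
    have hUc : (((uu : GaussianInt)) : ℂ) ≠ 0 := by
      intro h
      rw [h, mul_zero] at hB₁eq
      exact hB₁c hB₁eq
    rw [hratio, ha₁, hB₁]
    push_cast [GaussianInt.toComplex_mul]
    rw [hB₁eq]
    field_simp
    linear_combination (-1 : ℂ) * hEH
lemma exists_rep {x : ℂ} {f : ℂ → ℂ} (hf : f ∈ SOCs x) :
    ∃ z ε : GaussianInt, IsCoprime z (star z) ∧
      ε ∈ ({1, -1, ⟨0, 1⟩, ⟨0, -1⟩} : Set GaussianInt) ∧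
      f = fun w => (ε : ℂ) * ((z : ℂ) / conj (z : ℂ)) * w := by
  obtain ⟨⟨hlin, c, hc, Λ, hle, hind, hset⟩, u, hu, hfu⟩ := hf
  haveI hZi : Infinite Zi := Zi_infinite
  have hΛbot : Λ ≠ ⊥ := by
    rintro rfl
    rw [AddSubgroup.relIndex_bot_left] at hind
    exact hind (Nat.card_eq_zero_of_infinite)
  obtain ⟨lam0, hlam0L, hlam00⟩ : ∃ y ∈ Λ, y ≠ 0 := by
    by_contra h
    push_neg at h
    exact hΛbot ((AddSubgroup.eq_bot_iff_forall Λ).2 h)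
  have hcmem : c ∈ shiftedZi x ∩ (f '' shiftedZi x) := by
    rw [hset]
    exact ⟨0, Λ.zero_mem, by simp⟩
  have hc2 : c + lam0 ∈ shiftedZi x ∩ (f '' shiftedZi x) := by
    rw [hset]
    exact ⟨lam0, hlam0L, rfl⟩
  obtain ⟨w1, hw1, hfw1⟩ := hcmem.2
  obtain ⟨w2, hw2, hfw2⟩ := hc2.2
  have hlamu : lam0 = u * (w2 - w1) := by
    rw [mul_sub, ← hfu w2, ← hfu w1, hfw1, hfw2]
    ring
  obtain ⟨b1, rfl⟩ := mem_shiftedZi_iff.1 hw1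
  obtain ⟨b2, rfl⟩ := mem_shiftedZi_iff.1 hw2
  obtain ⟨a0, ha0⟩ := hle hlam0L
  have ha0' : GaussianInt.toComplex a0 = lam0 := ha0
  have hsub : (x + (b2 : ℂ)) - (x + (b1 : ℂ)) = ((b2 - b1 : GaussianInt) : ℂ) := by
    push_cast [GaussianInt.toComplex_sub]
    ring
  have hB0 : (b2 - b1 : GaussianInt) ≠ 0 := by
    intro h
    apply hlam00
    rw [hlamu, hsub, h, GaussianInt.toComplex_zero, mul_zero]
  have hBc : ((b2 - b1 : GaussianInt) : ℂ) ≠ 0 := by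
    rwa [Ne, GaussianInt.toComplex_eq_zero]
  have hufrac : u = (a0 : ℂ) / ((b2 - b1 : GaussianInt) : ℂ) := by
    rw [eq_div_iff hBc, ← hsub, ← hlamu, ha0']
  obtain ⟨z, ε, hz, hεu, hueq⟩ := exists_unit_rep u hu a0 (b2 - b1) hB0 hufrac
  exact ⟨z, ε, hz, mem_unitSet_iff.2 hεu, funext fun w => by rw [hfu w, hueq]⟩
lemma mem_SOCs_iff (p q : GaussianInt) (hq : q ≠ 0) (hpq : IsCoprime p q)
    (z : GaussianInt) (hcop : IsCoprime z (star z)) (ε : GaussianInt)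
    (hε : ε ∈ ({1, -1, ⟨0, 1⟩, ⟨0, -1⟩} : Set GaussianInt)) :
    ((fun w => (ε : ℂ) * ((z : ℂ) / conj (z : ℂ)) * w) ∈ SOCs ((p : ℂ) / (q : ℂ))) ↔
      q ∣ ε * z - star z := by
  have hz : z ≠ 0 := by
    rintro rfl
    rw [star_zero] at hcop
    exact not_isCoprime_zero_zero hcop
  have hεunit : IsUnit ε := mem_unitSet_iff.1 hε
  have hqc : (q : ℂ) ≠ 0 := by rwa [Ne, GaussianInt.toComplex_eq_zero]
  have hzc : (z : ℂ) ≠ 0 := by rwa [Ne, GaussianInt.toComplex_eq_zero]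
  have hczc : conj (z : ℂ) ≠ 0 := by
    rw [← GaussianInt.toComplex_star, Ne, GaussianInt.toComplex_eq_zero]
    simpa using hz
  have hεnorm : ‖(ε : ℂ)‖ = 1 := by
    rcases hε with rfl | rfl | rfl | rfl
    · simp
    · simp
    · rw [GaussianInt.toComplex_def']; simp
    · rw [GaussianInt.toComplex_def']; simp
  set x : ℂ := (p : ℂ) / (q : ℂ) with hx
  set u : ℂ := (ε : ℂ) * ((z : ℂ) / conj (z : ℂ)) with hu
  have hunorm : ‖u‖ = 1 := by
    rw [hu, norm_mul, hεnorm, one_mul, norm_div, RCLike.norm_conj,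
      div_self (norm_ne_zero_iff.2 hzc)]
  constructor
  · rintro ⟨⟨hlin, c, hc, Λ, hle, hind, hset⟩, hrot⟩
    have hcmem : c ∈ shiftedZi x ∩ ((fun w => u * w) '' shiftedZi x) := by
      rw [hset]
      exact ⟨0, Λ.zero_mem, by simp⟩
    obtain ⟨a, rfl⟩ := mem_shiftedZi_iff.1 hc
    obtain ⟨w, hw, hfw⟩ := hcmem.2
    obtain ⟨b, rfl⟩ := mem_shiftedZi_iff.1 hw
    have heq : x + (a : ℂ) = u * (x + (b : ℂ)) := hfw.symm
    have hint := cross_int hq hz heq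
    have hdvd : q ∣ p * (ε * z - star z) :=
      ⟨star z * a - ε * z * b, by linear_combination - hint⟩
    exact hpq.symm.dvd_of_dvd_mul_left hdvd
  · rintro ⟨k, hk⟩
    obtain ⟨ε', hεε'⟩ := hεunit.exists_right_inv
    obtain ⟨A, B0, hAB⟩ := id hcop
    set g : GaussianInt := B0 * p * k with hg
    set g' : GaussianInt := -(ε' * A * p * k) with hg'
    have key : star z * (p + q * g) = ε * z * (p + q * g') := by
      rw [hg, hg']
      linear_combination (-p) * hk + (q * p * k) * hAB + (z * q * A * p * k) * hεε'
    have hc2 : x + (g : ℂ) = u * (x + (g' : ℂ)) := cross_complex hq hz key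
    refine ⟨⟨?_, x + (g : ℂ), mem_shiftedZi_iff.2 ⟨g, rfl⟩, zMul z, zMul_le z,
      relindex_zMul hz, ?_⟩, ⟨u, hunorm, fun w => rfl⟩⟩
    · exact ⟨rotation ⟨u, by simpa [Submonoid.unitSphere] using hunorm⟩,
        funext fun w => rfl⟩
    · ext w
      simp only [Set.mem_inter_iff, Set.mem_image, Set.mem_vadd_set, vadd_eq_add]
      constructor
      · rintro ⟨hw1, w', hw', hww⟩
        obtain ⟨a, rfl⟩ := mem_shiftedZi_iff.1 hw1
        obtain ⟨b, rfl⟩ := mem_shiftedZi_iff.1 hw'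
        have heq : x + (a : ℂ) = u * (x + (b : ℂ)) := hww.symm
        have hint := cross_int hq hz heq
        have h3 : star z * (a - g) = ε * z * (b - g') :=
          mul_left_cancel₀ hq (by linear_combination hint - key)
        have hdvd : z ∣ (a - g) :=
          hcop.dvd_of_dvd_mul_left ⟨ε * (b - g'), by linear_combination h3⟩
        obtain ⟨h, hh⟩ := hdvd
        refine ⟨((z * h : GaussianInt) : ℂ), ⟨h, rfl⟩, ?_⟩
        have : (a : ℂ) = (g : ℂ) + ((z * h : GaussianInt) : ℂ) := by
          rw [← GaussianInt.toComplex_add, GaussianInt.toComplex_inj, ← hh]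
          ring
        rw [this]
        ring
      · rintro ⟨y, ⟨h, rfl⟩, rfl⟩
        have hyy : (GaussianInt.toComplex.toAddMonoidHom.comp (AddMonoidHom.mulLeft z)) h
            = ((z * h : GaussianInt) : ℂ) := rfl
        rw [hyy]
        constructor
        · refine mem_shiftedZi_iff.2 ⟨g + z * h, ?_⟩
          rw [GaussianInt.toComplex_add]
          ring
        · refine ⟨x + ((g' + ε' * star z * h : GaussianInt) : ℂ),
            mem_shiftedZi_iff.2 ⟨g' + ε' * star z * h, rfl⟩, ?_⟩
          have hcc : ((ε : ℂ)) * ((ε' : ℂ)) = 1 := by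
            rw [← GaussianInt.toComplex_mul, hεε', GaussianInt.toComplex_one]
          show u * _ = _
          rw [hc2]
          simp only [GaussianInt.toComplex_add, GaussianInt.toComplex_mul,
            GaussianInt.toComplex_star]
          rw [hu]
          field_simp
          ring_nf
          linear_combination ((h : ℂ) * conj (z : ℂ)) * hcc

theorem SOC_rational_shift (p q : GaussianInt) (hq : q ≠ 0) (hpq : IsCoprime p q)
    (z : GaussianInt) (hcop : IsCoprime z (star z))
    (ε : GaussianInt) (hε : ε ∈ ({1, -1, ⟨0, 1⟩, ⟨0, -1⟩} : Set GaussianInt)) :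
    ((fun w => (ε : ℂ) * ((z : ℂ) / conj (z : ℂ)) * w) ∈ SOCs ((p : ℂ) / (q : ℂ)) ↔
        q ∣ ε * z - star z) ∧
      SOCs ((p : ℂ) / (q : ℂ)) = SOCs (1 / (q : ℂ)) := by
  have h1q : ((1 : GaussianInt) : ℂ) = 1 := GaussianInt.toComplex_one
  constructor
  · exact mem_SOCs_iff p q hq hpq z hcop ε hε
  · ext f
    constructor
    · intro hf
      obtain ⟨z', ε', hz', hε', rfl⟩ := exists_rep hf
      have hdvd := (mem_SOCs_iff p q hq hpq z' hz' ε' hε').1 hf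
      have h2 := (mem_SOCs_iff 1 q hq isCoprime_one_left z' hz' ε' hε').2 hdvd
      rwa [h1q] at h2
    · intro hf
      obtain ⟨z', ε', hz', hε', rfl⟩ := exists_rep hf
      have hf' : (fun w => (ε' : ℂ) * ((z' : ℂ) / conj (z' : ℂ)) * w) ∈
          SOCs (((1 : GaussianInt) : ℂ) / (q : ℂ)) := by rwa [h1q]
      have hdvd := (mem_SOCs_iff 1 q hq isCoprime_one_left z' hz' ε' hε').1 hf'
      exact (mem_SOCs_iff p q hq hpq z' hz' ε' hε').2 hdvd
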